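/- Let M ≥ 2 and a: ℤ → ℂ a finitely supported mask with order J ≥ 1 sum rules with respect to M and ∑_k a(k) = c ≠ 0. Write ã(z) = (1+z+⋯+z^{M−1})^J b̃(z) and for j = 0, …, J set b̃_j(z) := (1+z+⋯+z^{M−1})^{J−j} b̃(z). Let T_{a,M,γ} and T_{b_j,M,γ} be the shifted transition operators. Then for every finitely supported sequence v and j = 0, …, J, T_{a,M,γ}(∇^j v) = ∇^j (T_{b_j,M,γ} v), where ∇ is the backward difference operator. -/

import Mathlib

/-- The symbol `ã(z) = ∑_k a(k) z^k` of a sequence, as a Laurent polynomial. -/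
noncomputable def symb (a : ℤ → ℂ) : LaurentPolynomial ℂ :=
  ∑ᶠ k : ℤ, LaurentPolynomial.C (a k) * LaurentPolynomial.T k

/-- The shifted transition operator `(T_{a,M,γ} v)(n) = M ∑_k a(k) v(γ + M n - k)`. -/
noncomputable def transOp (M : ℕ) (γ : ℤ) (a : ℤ → ℂ) (v : ℤ → ℂ) : ℤ → ℂ :=
  fun n => (M : ℂ) * ∑ᶠ k : ℤ, a k * v (γ + (M : ℤ) * n - k)

/-- Backward difference `(∇v)(k) = v(k) - v(k-1)`. -/
def bdiff (v : ℤ → ℂ) : ℤ → ℂ := fun k => v k - v (k - 1)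

lemma symb_apply (a : ℤ → ℂ) (ha : (Function.support a).Finite) (m : ℤ) :
    (symb a).coeff m = a m := by
  have h1 : symb a = ∑ᶠ k : ℤ, (AddMonoidAlgebra.single k (a k) : LaurentPolynomial ℂ) := by
    simp [symb, LaurentPolynomial.single_eq_C_mul_T]
  have hsupp : (Function.support fun k : ℤ =>
      (AddMonoidAlgebra.single k (a k) : LaurentPolynomial ℂ)).Finite := by
    refine ha.subset fun k hk => ?_
    simp only [Function.mem_support] at hk ⊢
    intro h; apply hk; rw [h]; simp
  have h2 := ((Finsupp.applyAddHom (M := ℂ) m).comp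
    (AddMonoidAlgebra.coeffAddEquiv (R := ℂ) (M := ℤ)).toAddMonoidHom).map_finsum hsupp
  rw [h1]
  calc (∑ᶠ k : ℤ, (AddMonoidAlgebra.single k (a k) : LaurentPolynomial ℂ)).coeff m
      = ∑ᶠ k : ℤ, (AddMonoidAlgebra.single k (a k) : LaurentPolynomial ℂ).coeff m := h2
    _ = a m := by
        rw [finsum_eq_single _ m]
        · rw [AddMonoidAlgebra.coeff_single]; exact Finsupp.single_eq_same
        · intro x hx; rw [AddMonoidAlgebra.coeff_single]; exact Finsupp.single_eq_of_ne' hx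

lemma coef_rel (M : ℕ) (A B : ℤ → ℂ) (hA : (Function.support A).Finite)
    (hB : (Function.support B).Finite)
    (h : symb A = (∑ i ∈ Finset.range M, LaurentPolynomial.T (i : ℤ)) * symb B) (k : ℤ) :
    A k = ∑ i ∈ Finset.range M, B (k - i) := by
  have hAk := symb_apply A hA k
  rw [h] at hAk
  rw [← hAk, Finset.sum_mul]
  rw [AddMonoidAlgebra.coeff_sum, Finsupp.finset_sum_apply]
  refine Finset.sum_congr rfl fun i _ => ?_
  have h1 : (LaurentPolynomial.T (i : ℤ) : LaurentPolynomial ℂ) * symb B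
      = AddMonoidAlgebra.single (i : ℤ) (1 : ℂ) * symb B := rfl
  rw [h1, AddMonoidAlgebra.coeff_single_mul_apply, one_mul, symb_apply B hB]
  ring_nf

lemma core (M : ℕ) (γ : ℤ) (A B : ℤ → ℂ) (hB : (Function.support B).Finite)
    (hcoef : ∀ k, A k = ∑ i ∈ Finset.range M, B (k - i)) (v : ℤ → ℂ) (n : ℤ) :
    transOp M γ A (bdiff v) n = bdiff (transOp M γ B v) n := by
  set m : ℤ := γ + (M : ℤ) * n with hm
  have hBg : ∀ g : ℤ → ℂ, (Function.support fun l : ℤ => B l * g l).Finite := by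
    intro g
    refine hB.subset fun l hl => ?_
    simp only [Function.mem_support] at hl ⊢
    intro h0; apply hl; rw [h0, zero_mul]
  set f : ℤ → ℂ := fun i => ∑ᶠ l : ℤ, B l * v (m - l - i) with hf
  have key : (∑ᶠ k : ℤ, A k * (bdiff v) (m - k)) = f 0 - f (M : ℤ) := by
    have step1 : (∑ᶠ k : ℤ, A k * (bdiff v) (m - k))
        = ∑ᶠ k : ℤ, ∑ i ∈ Finset.range M, B (k - i) * (bdiff v) (m - k) := by
      refine finsum_congr fun k => ?_
      rw [hcoef k, Finset.sum_mul]
    have hfin : ∀ i ∈ Finset.range M,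
        (Function.support fun k : ℤ => B (k - i) * (bdiff v) (m - k)).Finite := by
      intro i _
      refine (hB.image (· + (i : ℤ))).subset fun k hk => ?_
      simp only [Function.mem_support] at hk
      have : B (k - i) ≠ 0 := fun h0 => hk (by rw [h0, zero_mul])
      exact ⟨k - i, this, by ring⟩
    have step2 : (∑ᶠ k : ℤ, ∑ i ∈ Finset.range M, B (k - i) * (bdiff v) (m - k))
        = ∑ i ∈ Finset.range M, ∑ᶠ k : ℤ, B (k - i) * (bdiff v) (m - k) :=
      finsum_sum_comm _ _ hfin
    have step3 : ∀ i : ℕ, (∑ᶠ k : ℤ, B (k - i) * (bdiff v) (m - k))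
        = f i - f (i + 1) := by
      intro i
      have e1 : (∑ᶠ k : ℤ, B (k - i) * (bdiff v) (m - k))
          = ∑ᶠ l : ℤ, B l * (bdiff v) (m - l - i) := by
        rw [← finsum_comp_equiv (Equiv.addRight (i : ℤ))]
        refine finsum_congr fun l => ?_
        simp only [Equiv.coe_addRight]
        congr 2 <;> ring
      rw [e1]
      have e2 : (∑ᶠ l : ℤ, B l * (bdiff v) (m - l - i))
          = ∑ᶠ l : ℤ, (B l * v (m - l - i) - B l * v (m - l - (i + 1))) := by
        refine finsum_congr fun l => ?_
        rw [bdiff, mul_sub]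
        congr 2
        ring
      rw [e2, finsum_sub_distrib (hBg _) (hBg _)]
    rw [step1, step2]
    have tele := Finset.sum_range_sub' (fun i : ℕ => f i) M
    push_cast at tele
    rw [← tele]
    refine Finset.sum_congr rfl fun i _ => ?_
    rw [step3 i]
  have h0 : transOp M γ B v n = (M : ℂ) * f 0 := by
    rw [transOp, hf]
    refine congrArg _ (finsum_congr fun l => ?_)
    congr 1
    rw [hm]; ring
  have hMf : transOp M γ B v (n - 1) = (M : ℂ) * f (M : ℤ) := by
    rw [transOp, hf]
    refine congrArg _ (finsum_congr fun l => ?_)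
    congr 1
    rw [hm]; ring
  have rhs : bdiff (transOp M γ B v) n = (M : ℂ) * (f 0 - f (M : ℤ)) := by
    rw [bdiff]
    show transOp M γ B v n - transOp M γ B v (n - 1) = _
    rw [h0, hMf, mul_sub]
  rw [rhs, transOp, ← hm, key]

lemma bdiff_support_finite (v : ℤ → ℂ) (hv : (Function.support v).Finite) :
    (Function.support (bdiff v)).Finite := by
  refine (hv.union (hv.image (· + 1))).subset fun k hk => ?_
  simp only [Function.mem_support, bdiff] at hk
  by_cases h1 : v k = 0
  · by_cases h2 : v (k - 1) = 0
    · exact absurd (by rw [h1, h2, sub_zero]) hk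
    · exact Or.inr ⟨k - 1, h2, by ring⟩
  · exact Or.inl h1

lemma bdiff_iter_support_finite (j : ℕ) (v : ℤ → ℂ) (hv : (Function.support v).Finite) :
    (Function.support (bdiff^[j] v)).Finite := by
  induction j generalizing v hv with
  | zero => simpa using hv
  | succ j ih =>
    rw [Function.iterate_succ_apply]
    exact ih _ (bdiff_support_finite v hv)

theorem transOp_bdiff_commute (M : ℕ) (hM : 2 ≤ M) (γ : ℤ) (J : ℕ) (hJ : 1 ≤ J)
    (a b : ℤ → ℂ) (ha : (Function.support a).Finite)
    (hb : (Function.support b).Finite)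
    (c : ℂ) (hc : c ≠ 0) (hsum : ∑ᶠ k : ℤ, a k = c)
    (hab : symb a = (∑ i ∈ Finset.range M, LaurentPolynomial.T (i : ℤ)) ^ J * symb b)
    (b' : ℕ → ℤ → ℂ) (hb'fin : ∀ j : ℕ, (Function.support (b' j)).Finite)
    (hb'symb : ∀ j : ℕ, j ≤ J →
      symb (b' j) = (∑ i ∈ Finset.range M, LaurentPolynomial.T (i : ℤ)) ^ (J - j) * symb b) :
    ∀ j : ℕ, j ≤ J → ∀ v : ℤ → ℂ, (Function.support v).Finite →
      ∀ n : ℤ, transOp M γ a (bdiff^[j] v) n = bdiff^[j] (transOp M γ (b' j) v) n := by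
  intro j
  induction j with
  | zero =>
    intro _ v hv n
    have hs : symb a = symb (b' 0) := by
      rw [hab, hb'symb 0 (Nat.zero_le J), Nat.sub_zero]
    have hav : a = b' 0 := by
      funext k
      rw [← symb_apply a ha k, ← symb_apply (b' 0) (hb'fin 0) k, hs]
    simp [hav]
  | succ j ih =>
    intro hj v hv n
    have hjJ : j ≤ J := Nat.le_of_succ_le hj
    have hsymb : symb (b' j) = (∑ i ∈ Finset.range M, LaurentPolynomial.T (i : ℤ))
        * symb (b' (j + 1)) := by
      rw [hb'symb j hjJ, hb'symb (j + 1) hj, ← mul_assoc, ← pow_succ']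
      congr 2
      omega
    have hcoef := coef_rel M (b' j) (b' (j + 1)) (hb'fin j) (hb'fin (j + 1)) hsymb
    have hstep : transOp M γ (b' j) (bdiff v) = bdiff (transOp M γ (b' (j + 1)) v) := by
      funext n'
      exact core M γ (b' j) (b' (j + 1)) (hb'fin (j + 1)) hcoef v n'
    rw [Function.iterate_succ_apply, Function.iterate_succ_apply,
      ih hjJ (bdiff v) (bdiff_support_finite v hv) n, hstep]
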